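/- arXiv:2010.11260 — 4 statements merged into one kernel-verified Lean document; each statement's English description precedes it below -/
import Mathlib

section
/- Let G be a connected finite simple graph with V vertices and E edges. Then G contains an independent set of cardinality at least ⌊(1/2)((2E + V + 1) - √((2E + V + 1)² - 4V²))⌋. -/
open Finset

namespace HSAux

variable {α : Type*} [Fintype α] [DecidableEq α] (G : SimpleGraph α) [DecidableRel G.Adj]

/-- The graph `G` restricted to a finite vertex set `A` (vertices outside `A` are isolated). -/
def HA (A : Finset α) : SimpleGraph α where
  Adj x y := x ∈ A ∧ y ∈ A ∧ G.Adj x y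
  symm := ⟨by rintro x y ⟨hx, hy, h⟩; exact ⟨hy, hx, h.symm⟩⟩
  loopless := ⟨by rintro x ⟨_, _, h⟩; exact G.loopless.irrefl x h⟩

/-- Number of neighbors of `v` inside `A`. -/
def degA (A : Finset α) (v : α) : ℕ := (A.filter (G.Adj v)).card

/-- Doubled number of edges inside `A`. -/
def eA (A : Finset α) : ℕ := ∑ v ∈ A, degA G A v

/-- Number of connected components of the induced graph on `A`. -/
noncomputable def cA (A : Finset α) : ℕ :=
  ((HA G A).connectedComponentMk '' (A : Set α)).ncard

omit [Fintype α] [DecidableEq α] [DecidableRel G.Adj] in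
lemma cA_eq (A : Finset α) [DecidableEq ((HA G A).ConnectedComponent)] :
    cA G A = (A.image (HA G A).connectedComponentMk).card := by
  rw [cA, ← Finset.coe_image, Set.ncard_coe_finset]


private lemma HS_arith (n' k' e' c' e c x d : ℤ) (hk0 : 0 ≤ k') (hn'0 : 0 ≤ n')
    (he'0 : 0 ≤ e') (hc'0 : 0 ≤ c') (hd0 : 0 ≤ d)
    (hE' : e' + (d + 1) * d + x ≤ e) (hC' : c' + 1 ≤ c + x)
    (hIH : n'^2 + k'^2 ≤ k' * (e' + n' + c')) :
    (n' + (d + 1))^2 + (k' + 1)^2 ≤ (k' + 1) * (e + (n' + (d + 1)) + c) := by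
  set a : ℤ := d + 1 with ha
  have ha1 : 1 ≤ a := by linarith
  have hS : e' + n' + c' + a^2 + 1 ≤ e + (n' + a) + c := by nlinarith
  rcases eq_or_lt_of_le hk0 with hk0' | hk0'
  · have hn0 : n' = 0 := by nlinarith
    rw [← hk0'] at hIH ⊢
    nlinarith
  · have hRS : 2 * a * n' - a^2 * k' + k' ≤ e' + n' + c' := by
      have h6 : k' * (2 * a * n' - a^2 * k' + k') ≤ k' * (e' + n' + c') := by
        nlinarith [sq_nonneg (n' - a * k')]
      exact le_of_mul_le_mul_left h6 hk0'
    nlinarith [mul_le_mul_of_nonneg_left hS (by linarith : (0:ℤ) ≤ k' + 1)]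

theorem HS_main (A : Finset α) : ∃ s : Finset α, s ⊆ A ∧
    (∀ x ∈ s, ∀ y ∈ s, ¬ G.Adj x y) ∧
    ((A.card : ℤ)^2 + (s.card : ℤ)^2
      ≤ (s.card : ℤ) * ((eA G A : ℤ) + (A.card : ℤ) + (cA G A : ℤ))) := by
  classical
  induction A using Finset.strongInduction with
  | _ A ih =>
  rcases A.eq_empty_or_nonempty with rfl | hA
  · exact ⟨∅, Finset.Subset.refl _, by simp, by simp⟩
  · -- pick a vertex of minimum degree within A
    obtain ⟨v, hvA, hvmin⟩ := A.exists_min_image (degA G A) hA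
    set d : ℕ := degA G A v with hd
    set N : Finset α := insert v (A.filter (G.Adj v)) with hN
    have hvN : v ∈ N := mem_insert_self _ _
    have hNA : N ⊆ A := insert_subset hvA (filter_subset _ _)
    have hNcard : N.card = d + 1 := by
      rw [hN, card_insert_of_notMem (by simp [G.irrefl]), hd, degA]
    set A' : Finset α := A \ N with hA'
    have hA'subA : A' ⊆ A := sdiff_subset
    have hvA' : v ∉ A' := by simp [hA', hvN]
    have hssub : A' ⊂ A := (ssubset_iff_of_subset hA'subA).2 ⟨v, hvA, hvA'⟩
    obtain ⟨s', hs'A', hs'ind, hs'ineq⟩ := ih A' hssub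
    have hvs' : v ∉ s' := fun h => hvA' (hs'A' h)
    refine ⟨insert v s', insert_subset hvA (hs'A'.trans hA'subA), ?_, ?_⟩
    · -- independence
      have hnadj : ∀ u ∈ A', ¬ G.Adj v u := by
        intro u hu hadj
        have hmem : u ∈ N := mem_insert_of_mem (mem_filter.2 ⟨hA'subA hu, hadj⟩)
        rw [hA', mem_sdiff] at hu
        exact hu.2 hmem
      intro x hx y hy hadj
      rcases mem_insert.1 hx with hxv | hxs
      · rcases mem_insert.1 hy with hyv | hys
        · subst hxv; subst hyv; exact G.loopless.irrefl _ hadj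
        · subst hxv; exact hnadj y (hs'A' hys) hadj
      · rcases mem_insert.1 hy with hyv | hys
        · subst hyv; exact hnadj x (hs'A' hxs) hadj.symm
        · exact hs'ind x hxs y hys hadj
    · -- the counting
      have hcardA : A.card = A'.card + (d + 1) := by
        rw [hA', ← hNcard]
        exact (Finset.card_sdiff_add_card_eq_card hNA).symm
      have hscard : (insert v s').card = s'.card + 1 := card_insert_of_notMem hvs'
      set X : ℕ := ∑ u ∈ N, (A'.filter (G.Adj u)).card with hX
      have hAsplit : A = N ∪ A' := (Finset.union_sdiff_of_subset hNA).symm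
      have hdisj : Disjoint N A' := Finset.disjoint_sdiff
      -- double counting of cross pairs
      have hswap : ∑ x ∈ A', (N.filter (G.Adj x)).card = X := by
        rw [hX]
        simp only [Finset.card_filter]
        rw [Finset.sum_comm]
        apply Finset.sum_congr rfl
        intro u _
        apply Finset.sum_congr rfl
        intro w _
        simp [G.adj_comm u w]
      -- edge count split
      have hEsplit : eA G A = (∑ u ∈ N, degA G A u) + X + eA G A' := by
        have hfA : ∀ x, degA G A x
            = (N.filter (G.Adj x)).card + (A'.filter (G.Adj x)).card := by
          intro x
          rw [degA]
          conv_lhs => rw [hAsplit]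
          rw [filter_union, card_union_of_disjoint (Finset.disjoint_filter_filter hdisj)]
        calc eA G A = ∑ x ∈ A, degA G A x := rfl
          _ = ∑ x ∈ N, degA G A x + ∑ x ∈ A', degA G A x := by
              have hsu := Finset.sum_union (f := fun x => degA G A x) hdisj
              rw [← hAsplit] at hsu
              exact hsu
          _ = ∑ x ∈ N, degA G A x
              + (∑ x ∈ A', (N.filter (G.Adj x)).card
                 + ∑ x ∈ A', (A'.filter (G.Adj x)).card) := by
              rw [← Finset.sum_add_distrib]
              congr 1
              exact Finset.sum_congr rfl fun x _ => hfA x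
          _ = (∑ u ∈ N, degA G A u) + X + eA G A' := by
              rw [hswap]
              have h1 : ∑ x ∈ A', (A'.filter (G.Adj x)).card = eA G A' := rfl
              rw [h1]; ring
      have hEdeg : (d + 1) * d + X + eA G A' ≤ eA G A := by
        rw [hEsplit]
        have hmin : (d + 1) * d ≤ ∑ u ∈ N, degA G A u := by
          calc (d + 1) * d = ∑ _u ∈ N, d := by rw [Finset.sum_const, hNcard, smul_eq_mul]
            _ ≤ ∑ u ∈ N, degA G A u := Finset.sum_le_sum fun u hu => hvmin u (hNA hu)
        omega
      -- component bound
      set T : Finset α := A'.filter (fun w => ∃ u ∈ N, G.Adj u w) with hT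
      have hTX : T.card ≤ X := by
        calc T.card ≤ (N.biUnion (fun u => A'.filter (G.Adj u))).card := by
              apply card_le_card
              intro w hw
              rw [hT, mem_filter] at hw
              obtain ⟨hwA', u, huN, hadj⟩ := hw
              exact mem_biUnion.2 ⟨u, huN, mem_filter.2 ⟨hwA', hadj⟩⟩
          _ ≤ ∑ u ∈ N, (A'.filter (G.Adj u)).card := card_biUnion_le
          _ = X := rfl
      have key : ∀ w u : α, (HA G A).Walk w u → w ∈ A' →
          (∀ x ∈ T, ¬ (HA G A').Reachable w x) → u ∈ A' ∧ (HA G A').Reachable w u := by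
        intro w u p
        induction p with
        | nil =>
          intro hw _
          exact ⟨hw, SimpleGraph.Reachable.refl _⟩
        | @cons w₁ b u₁ hadj q ihq =>
          intro hw hTw
          obtain ⟨hwA, hbA, hab⟩ := hadj
          by_cases hbN : b ∈ N
          · exact absurd (SimpleGraph.Reachable.refl w₁)
              (hTw w₁ (mem_filter.2 ⟨hw, ⟨b, hbN, hab.symm⟩⟩))
          · have hb' : b ∈ A' := mem_sdiff.2 ⟨hbA, hbN⟩
            have hadj' : (HA G A').Adj w₁ b := ⟨hw, hb', hab⟩
            have hTb : ∀ x ∈ T, ¬ (HA G A').Reachable b x := fun x hx hr =>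
              hTw x hx (hadj'.reachable.trans hr)
            obtain ⟨hu, hru⟩ := ihq hb' hTb
            exact ⟨hu, hadj'.reachable.trans hru⟩
      have hle : HA G A' ≤ HA G A := by
        intro x y h
        exact ⟨hA'subA h.1, hA'subA h.2.1, h.2.2⟩
      set φ : HA G A' →g HA G A := SimpleGraph.Hom.ofLE hle with hφ
      set f : (HA G A').ConnectedComponent → (HA G A).ConnectedComponent :=
        SimpleGraph.ConnectedComponent.map φ with hf
      have hfmk : ∀ w, f ((HA G A').connectedComponentMk w)
          = (HA G A).connectedComponentMk w := fun w => rfl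
      set mk' := (HA G A').connectedComponentMk with hmk'
      set mkA := (HA G A).connectedComponentMk with hmkA
      have hComp : cA G A' + 1 ≤ cA G A + X := by
        rw [cA_eq, cA_eq, ← hmk', ← hmkA]
        set P2 := (A'.image mk').filter (fun K => ∀ x ∈ T, mk' x ≠ K) with hP2
        have hsub : A'.image mk' ⊆ T.image mk' ∪ P2 := by
          intro K hK
          by_cases hexi : ∃ x ∈ T, mk' x = K
          · obtain ⟨x, hx, rfl⟩ := hexi
            exact mem_union_left _ (mem_image_of_mem _ hx)
          · push_neg at hexi
            exact mem_union_right _ (mem_filter.2 ⟨hK, hexi⟩)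
        have hP2card : P2.card ≤ ((A.image mkA).erase (mkA v)).card := by
          apply Finset.card_le_card_of_injOn f
          · intro K hK
            obtain ⟨hK1, hK2⟩ := mem_filter.1 hK
            obtain ⟨w, hwA', hwK⟩ := mem_image.1 hK1
            subst hwK
            have hwT : ∀ x ∈ T, ¬ (HA G A').Reachable w x := fun x hx hr =>
              hK2 x hx (SimpleGraph.ConnectedComponent.eq.2 hr.symm)
            rw [hfmk w]
            refine mem_erase.2 ⟨?_, mem_image_of_mem _ (hA'subA hwA')⟩
            intro heq
            have hreach : (HA G A).Reachable w v :=
              SimpleGraph.ConnectedComponent.exact heq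
            obtain ⟨p⟩ := hreach
            exact hvA' (key w v p hwA' hwT).1
          · intro K1 hK1 K2 hK2 hfeq
            obtain ⟨hK11, hK12⟩ := mem_filter.1 (mem_coe.1 hK1)
            obtain ⟨hK21, hK22⟩ := mem_filter.1 (mem_coe.1 hK2)
            obtain ⟨w1, hw1, hwK1⟩ := mem_image.1 hK11
            obtain ⟨w2, hw2, hwK2⟩ := mem_image.1 hK21
            subst hwK1; subst hwK2
            rw [hfmk w1, hfmk w2] at hfeq
            have hreach : (HA G A).Reachable w1 w2 :=
              SimpleGraph.ConnectedComponent.exact hfeq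
            obtain ⟨p⟩ := hreach
            have hwT1 : ∀ x ∈ T, ¬ (HA G A').Reachable w1 x := fun x hx hr =>
              hK12 x hx (SimpleGraph.ConnectedComponent.eq.2 hr.symm)
            exact SimpleGraph.ConnectedComponent.sound (key w1 w2 p hw1 hwT1).2
        have hvimg : mkA v ∈ A.image mkA := mem_image_of_mem _ hvA
        have hAc1 : 1 ≤ (A.image mkA).card := card_pos.2 ⟨_, hvimg⟩
        have herase : ((A.image mkA).erase (mkA v)).card = (A.image mkA).card - 1 :=
          card_erase_of_mem hvimg
        have hchain : (A'.image mk').card ≤ T.card + ((A.image mkA).card - 1) := by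
          calc (A'.image mk').card ≤ (T.image mk' ∪ P2).card := card_le_card hsub
            _ ≤ (T.image mk').card + P2.card := card_union_le _ _
            _ ≤ T.card + ((A.image mkA).card - 1) :=
                add_le_add card_image_le (herase ▸ hP2card)
        omega
      -- final arithmetic
      clear_value T N A' X d
      have hk0 : (0:ℤ) ≤ (s'.card : ℤ) := Int.natCast_nonneg _
      have hE' : (eA G A' : ℤ) + ((d:ℤ) + 1) * d + X ≤ (eA G A : ℤ) := by
        have h2 : ((d + 1) * d + X + eA G A' : ℕ) ≤ (eA G A : ℕ) := hEdeg
        have h3 : (((d + 1) * d + X + eA G A' : ℕ) : ℤ) ≤ ((eA G A : ℕ) : ℤ) :=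
          Int.ofNat_le.2 h2
        push_cast at h3
        linarith
      have hC' : (cA G A' : ℤ) + 1 ≤ (cA G A : ℤ) + X := by exact_mod_cast hComp
      have harith := HS_arith ((A'.card : ℤ)) ((s'.card : ℤ)) ((eA G A' : ℤ))
        ((cA G A' : ℤ)) ((eA G A : ℤ)) ((cA G A : ℤ)) ((X : ℤ)) ((d : ℤ))
        hk0 (Int.natCast_nonneg _) (Int.natCast_nonneg _) (Int.natCast_nonneg _)
        (Int.natCast_nonneg _) hE' hC' hs'ineq
      rw [hscard, hcardA]
      push_cast
      ring_nf at harith ⊢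
      exact harith

end HSAux

/-- Harant–Schiermeyer: a connected finite simple graph with `V` vertices and `E`
edges contains an independent set of cardinality at least
`⌊((2E + V + 1) - √((2E + V + 1)² - 4V²))/2⌋`. -/
theorem independent_set_lower_bound {α : Type*} [Fintype α] [DecidableEq α]
    (G : SimpleGraph α) [DecidableRel G.Adj] (hconn : G.Connected) :
    ∃ s : Finset α, (∀ x ∈ s, ∀ y ∈ s, ¬ G.Adj x y) ∧
      ⌊((2 * (G.edgeFinset.card : ℝ) + (Fintype.card α : ℝ) + 1)
          - Real.sqrt ((2 * (G.edgeFinset.card : ℝ) + (Fintype.card α : ℝ) + 1) ^ 2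
              - 4 * (Fintype.card α : ℝ) ^ 2)) / 2⌋ ≤ (s.card : ℤ) := by
  classical
  obtain ⟨s, -, hind, hineq⟩ := HSAux.HS_main G (Finset.univ : Finset α)
  refine ⟨s, hind, ?_⟩
  -- identify the quantities
  have hEuniv : HSAux.eA G (Finset.univ : Finset α) = 2 * G.edgeFinset.card := by
    rw [← SimpleGraph.sum_degrees_eq_twice_card_edges]
    apply Finset.sum_congr rfl
    intro v _
    rw [HSAux.degA, SimpleGraph.degree, SimpleGraph.neighborFinset_eq_filter]
  have hHA : HSAux.HA G (Finset.univ : Finset α) = G := by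
    ext x y; simp [HSAux.HA]
  have hcuniv : HSAux.cA G (Finset.univ : Finset α) = 1 := by
    rw [HSAux.cA_eq, Finset.card_eq_one]
    obtain ⟨v₀⟩ := hconn.nonempty
    refine ⟨(HSAux.HA G Finset.univ).connectedComponentMk v₀, ?_⟩
    ext K
    simp only [Finset.mem_image, Finset.mem_univ, true_and, Finset.mem_singleton]
    constructor
    · rintro ⟨w, rfl⟩
      apply SimpleGraph.ConnectedComponent.sound
      rw [hHA]
      exact hconn.preconnected w v₀
    · rintro rfl
      exact ⟨v₀, rfl⟩
  rw [hEuniv, hcuniv, Finset.card_univ] at hineq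
  have hZ : ((Fintype.card α : ℤ))^2 + ((s.card : ℤ))^2
      ≤ (s.card : ℤ) * (2 * (G.edgeFinset.card : ℤ) + (Fintype.card α : ℤ) + 1) := by
    exact_mod_cast hineq
  have hreal : ((Fintype.card α : ℝ))^2 + ((s.card : ℝ))^2
      ≤ (s.card : ℝ) * (2 * (G.edgeFinset.card : ℝ) + (Fintype.card α : ℝ) + 1) := by
    exact_mod_cast hZ
  set n : ℝ := (Fintype.card α : ℝ) with hn
  set m : ℝ := (G.edgeFinset.card : ℝ) with hm
  set k : ℝ := (s.card : ℝ) with hk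
  set B : ℝ := 2 * m + n + 1 with hB
  have hkz : k^2 - B * k + n^2 ≤ 0 := by rw [hB]; nlinarith [hreal]
  have hsq : (B - 2 * k)^2 ≤ B^2 - 4 * n^2 := by nlinarith
  have hsqrt : B - 2 * k ≤ Real.sqrt (B^2 - 4 * n^2) := by
    calc B - 2 * k ≤ |B - 2 * k| := le_abs_self _
      _ = Real.sqrt ((B - 2 * k)^2) := (Real.sqrt_sq_eq_abs _).symm
      _ ≤ Real.sqrt (B^2 - 4 * n^2) := Real.sqrt_le_sqrt hsq
  have hfinal : (B - Real.sqrt (B^2 - 4 * n^2)) / 2 ≤ k := by linarith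
  calc ⌊(B - Real.sqrt (B^2 - 4 * n^2)) / 2⌋ ≤ ⌊k⌋ := Int.floor_le_floor hfinal
    _ = (s.card : ℤ) := by rw [hk]; exact_mod_cast Int.floor_natCast s.card
end

section
/- Let (X, d) be a metric space, let z, w ∈ X, and let P be a geodesic from z to w. Suppose 0 ≤ t < t' < s ≤ d(z, w). Then the number of geodesics from P(t) to P(s) is at least the number of geodesics from P(t') to P(s); more precisely, there is an injection from the set of geodesics from P(t') to P(s) into the set of geodesics from P(t) to P(s). -/
/-- `P` is a geodesic from `x` to `y` in a metric space: a path defined on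
`[0, dist x y]` with `P 0 = x`, `P (dist x y) = y`, and
`dist (P s) (P t) = |s - t|` for all `s, t` in the domain. -/
def IsGeodesic {X : Type*} [MetricSpace X] (x y : X)
    (P : Set.Icc (0 : ℝ) (dist x y) → X) : Prop :=
  P ⟨0, Set.left_mem_Icc.mpr dist_nonneg⟩ = x ∧
  P ⟨dist x y, Set.right_mem_Icc.mpr dist_nonneg⟩ = y ∧
  ∀ s t : Set.Icc (0 : ℝ) (dist x y), dist (P s) (P t) = |s.1 - t.1|


/-- If `P` is a geodesic from `z` to `w` and `0 ≤ t < t' < s ≤ dist z w`, then the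
set of geodesics from `P t'` to `P s` injects into the set of geodesics from
`P t` to `P s`. -/
theorem geodesic_count_antitone {X : Type*} [MetricSpace X] (z w : X)
    (P : Set.Icc (0 : ℝ) (dist z w) → X) (hP : IsGeodesic z w P)
    (t t' s : ℝ) (h0 : 0 ≤ t) (h1 : t < t') (h2 : t' < s) (h3 : s ≤ dist z w) :
    ∃ f : {Q : Set.Icc (0 : ℝ)
              (dist (P ⟨t', Set.mem_Icc.mpr ⟨by linarith, by linarith⟩⟩)
                    (P ⟨s, Set.mem_Icc.mpr ⟨by linarith, h3⟩⟩)) → X //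
            IsGeodesic (P ⟨t', Set.mem_Icc.mpr ⟨by linarith, by linarith⟩⟩)
              (P ⟨s, Set.mem_Icc.mpr ⟨by linarith, h3⟩⟩) Q} →
        {Q : Set.Icc (0 : ℝ)
              (dist (P ⟨t, Set.mem_Icc.mpr ⟨h0, by linarith⟩⟩)
                    (P ⟨s, Set.mem_Icc.mpr ⟨by linarith, h3⟩⟩)) → X //
            IsGeodesic (P ⟨t, Set.mem_Icc.mpr ⟨h0, by linarith⟩⟩)
              (P ⟨s, Set.mem_Icc.mpr ⟨by linarith, h3⟩⟩) Q},
      Function.Injective f := by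
  classical
  obtain ⟨hP0, hPd, hPdist⟩ := hP
  have htm : t ∈ Set.Icc (0:ℝ) (dist z w) := ⟨h0, by linarith⟩
  have ht'm : t' ∈ Set.Icc (0:ℝ) (dist z w) := ⟨by linarith, by linarith⟩
  have hsm : s ∈ Set.Icc (0:ℝ) (dist z w) := ⟨by linarith, h3⟩
  have pd : ∀ (a b : ℝ) (ha : a ∈ Set.Icc (0:ℝ) (dist z w))
      (hb : b ∈ Set.Icc (0:ℝ) (dist z w)),
      dist (P ⟨a, ha⟩) (P ⟨b, hb⟩) = |a - b| := fun a b ha hb => hPdist ⟨a, ha⟩ ⟨b, hb⟩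
  have hD : dist (P ⟨t, htm⟩) (P ⟨s, hsm⟩) = s - t := by
    rw [pd, abs_sub_comm, abs_of_nonneg (by linarith : (0:ℝ) ≤ s - t)]
  have hD' : dist (P ⟨t', ht'm⟩) (P ⟨s, hsm⟩) = s - t' := by
    rw [pd, abs_sub_comm, abs_of_nonneg (by linarith : (0:ℝ) ≤ s - t')]
  have mem1 : ∀ u : ℝ, u ∈ Set.Icc (0:ℝ) (dist (P ⟨t, htm⟩) (P ⟨s, hsm⟩)) →
      u ≤ t' - t → t + u ∈ Set.Icc (0:ℝ) (dist z w) := by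
    intro u hu h
    exact ⟨by linarith [hu.1], by linarith [ht'm.2]⟩
  have mem2 : ∀ u : ℝ, u ∈ Set.Icc (0:ℝ) (dist (P ⟨t, htm⟩) (P ⟨s, hsm⟩)) →
      ¬ u ≤ t' - t → u - (t' - t) ∈ Set.Icc (0:ℝ) (dist (P ⟨t', ht'm⟩) (P ⟨s, hsm⟩)) := by
    intro u hu h
    have hu2 := hu.2
    rw [hD] at hu2
    rw [hD']
    constructor <;> [linarith; linarith]
  -- the concatenation construction
  have hgeo : ∀ Q : {Q : Set.Icc (0:ℝ) (dist (P ⟨t', ht'm⟩) (P ⟨s, hsm⟩)) → X //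
        IsGeodesic (P ⟨t', ht'm⟩) (P ⟨s, hsm⟩) Q},
      IsGeodesic (P ⟨t, htm⟩) (P ⟨s, hsm⟩)
        (fun u => if h : u.1 ≤ t' - t then P ⟨t + u.1, mem1 u.1 u.2 h⟩
                  else Q.1 ⟨u.1 - (t' - t), mem2 u.1 u.2 h⟩) := by
    intro Q
    obtain ⟨Q, hQ0, hQd, hQdist⟩ := Q
    have qd : ∀ (a b : ℝ) (ha : a ∈ Set.Icc (0:ℝ) (dist (P ⟨t', ht'm⟩) (P ⟨s, hsm⟩)))
        (hb : b ∈ Set.Icc (0:ℝ) (dist (P ⟨t', ht'm⟩) (P ⟨s, hsm⟩))),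
        dist (Q ⟨a, ha⟩) (Q ⟨b, hb⟩) = |a - b| := fun a b ha hb => hQdist ⟨a, ha⟩ ⟨b, hb⟩
    -- mixed distance computation
    have mix : ∀ (u v : ℝ) (hu : u ∈ Set.Icc (0:ℝ) (dist (P ⟨t, htm⟩) (P ⟨s, hsm⟩)))
        (hv : v ∈ Set.Icc (0:ℝ) (dist (P ⟨t, htm⟩) (P ⟨s, hsm⟩)))
        (h : u ≤ t' - t) (h' : ¬ v ≤ t' - t),
        dist (P ⟨t + u, mem1 u hu h⟩) (Q ⟨v - (t' - t), mem2 v hv h'⟩) = v - u := by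
      intro u v hu hv h h'
      have hv2 := hv.2; rw [hD] at hv2
      have hzero : (0:ℝ) ∈ Set.Icc (0:ℝ) (dist (P ⟨t', ht'm⟩) (P ⟨s, hsm⟩)) :=
        Set.left_mem_Icc.mpr dist_nonneg
      have hend : dist (P ⟨t', ht'm⟩) (P ⟨s, hsm⟩) ∈
          Set.Icc (0:ℝ) (dist (P ⟨t', ht'm⟩) (P ⟨s, hsm⟩)) :=
        Set.right_mem_Icc.mpr dist_nonneg
      have hQ0' : Q ⟨0, hzero⟩ = P ⟨t', ht'm⟩ := hQ0
      have hQd' : Q ⟨dist (P ⟨t', ht'm⟩) (P ⟨s, hsm⟩), hend⟩ = P ⟨s, hsm⟩ := hQd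
      apply le_antisymm
      · calc dist (P ⟨t + u, mem1 u hu h⟩) (Q ⟨v - (t' - t), mem2 v hv h'⟩)
            ≤ dist (P ⟨t + u, mem1 u hu h⟩) (P ⟨t', ht'm⟩)
              + dist (P ⟨t', ht'm⟩) (Q ⟨v - (t' - t), mem2 v hv h'⟩) := dist_triangle _ _ _
          _ = |t + u - t'| + dist (Q ⟨0, hzero⟩) (Q ⟨v - (t' - t), mem2 v hv h'⟩) := by
              rw [pd, hQ0']
          _ = |t + u - t'| + |0 - (v - (t' - t))| := by rw [qd]
          _ = v - u := by
              rw [abs_of_nonpos (by linarith : t + u - t' ≤ 0),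
                abs_of_nonpos (by linarith : (0:ℝ) - (v - (t' - t)) ≤ 0)]
              ring
      · have key : dist (P ⟨t + u, mem1 u hu h⟩) (P ⟨s, hsm⟩)
            ≤ dist (P ⟨t + u, mem1 u hu h⟩) (Q ⟨v - (t' - t), mem2 v hv h'⟩)
              + dist (Q ⟨v - (t' - t), mem2 v hv h'⟩) (P ⟨s, hsm⟩) := dist_triangle _ _ _
        have e1 : dist (P ⟨t + u, mem1 u hu h⟩) (P ⟨s, hsm⟩) = s - t - u := by
          rw [pd, abs_of_nonpos (by linarith : t + u - s ≤ 0)]; ring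
        have e2 : dist (Q ⟨v - (t' - t), mem2 v hv h'⟩) (P ⟨s, hsm⟩) = s - t - v := by
          have h4 := congrArg (fun p => dist (Q ⟨v - (t' - t), mem2 v hv h'⟩) p) hQd'
          rw [← h4, qd, hD', abs_of_nonpos (by linarith : v - (t' - t) - (s - t') ≤ 0)]
          ring
        rw [e1, e2] at key
        linarith
    refine ⟨?_, ?_, ?_⟩
    · have hle : (0:ℝ) ≤ t' - t := by linarith
      simp only [dif_pos hle]
      exact congrArg P (Subtype.ext (add_zero t))
    · have hgt : ¬ dist (P ⟨t, htm⟩) (P ⟨s, hsm⟩) ≤ t' - t := by rw [hD]; intro hh; linarith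
      simp only [dif_neg hgt]
      refine (congrArg Q (Subtype.ext ?_)).trans hQd
      show dist (P ⟨t, htm⟩) (P ⟨s, hsm⟩) - (t' - t) = dist (P ⟨t', ht'm⟩) (P ⟨s, hsm⟩)
      rw [hD, hD']; ring
    · rintro ⟨u, hu⟩ ⟨v, hv⟩
      simp only []
      by_cases h : u ≤ t' - t <;> by_cases h' : v ≤ t' - t
      · rw [dif_pos h, dif_pos h', pd]
        congr 1
        ring
      · rw [dif_pos h, dif_neg h', mix u v hu hv h h',
          abs_sub_comm, abs_of_nonneg (by linarith : (0:ℝ) ≤ v - u)]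
      · rw [dif_neg h, dif_pos h', dist_comm, mix v u hv hu h' h,
          abs_of_nonneg (by linarith : (0:ℝ) ≤ u - v)]
      · rw [dif_neg h, dif_neg h', qd]
        congr 1
        ring
  refine ⟨fun Q => ⟨_, hgeo Q⟩, ?_⟩
  intro Q Q' hQQ'
  apply Subtype.ext
  funext v
  have hv2 : v.1 ≤ s - t' := le_trans v.2.2 hD'.le
  rcases eq_or_lt_of_le v.2.1 with h0v | h0v
  · have hv0 : v = ⟨0, Set.left_mem_Icc.mpr dist_nonneg⟩ := Subtype.ext h0v.symm
    rw [hv0]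
    exact Q.2.1.trans Q'.2.1.symm
  · have hmem : v.1 + (t' - t) ∈ Set.Icc (0:ℝ) (dist (P ⟨t, htm⟩) (P ⟨s, hsm⟩)) := by
      rw [hD]; constructor <;> [linarith [v.2.1]; linarith]
    have := congrFun (congrArg Subtype.val hQQ') ⟨v.1 + (t' - t), hmem⟩
    have hne : ¬ v.1 + (t' - t) ≤ t' - t := by intro hh; linarith
    simp only [dif_neg hne] at this
    have heq : (⟨v.1 + (t' - t) - (t' - t), mem2 _ hmem hne⟩ :
        Set.Icc (0:ℝ) (dist (P ⟨t', ht'm⟩) (P ⟨s, hsm⟩))) = v :=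
      Subtype.ext (by ring)
    rwa [heq] at this
end

section
/- Let (X, d) be a metric space, z, w ∈ X with z ≠ w, and let P, P' be two geodesics from z to w. Suppose b ∈ (0, d(z,w)) is such that P(b) = P'(b), and the set T = {t ∈ [b, d(z,w)] : P(t) ≠ P'(t)} has n connected components, each a nonempty open interval. Then there are at least 2^n distinct geodesics from P(b) to w. -/
/-- Let `P, P'` be geodesics from `z` to `w`, let `b ∈ (0, dist z w)` with
`P b = P' b`, and suppose the set `T = {t ∈ [b, dist z w] : P t ≠ P' t}` is the
disjoint union of `n` nonempty open intervals. Then there are at least `2^n`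
distinct geodesics from `P b` to `w`. -/
theorem geodesics_from_excursions {X : Type*} [MetricSpace X] (z w : X)
    (hzw : z ≠ w)
    (P P' : Set.Icc (0 : ℝ) (dist z w) → X)
    (hP : IsGeodesic z w P) (hP' : IsGeodesic z w P')
    (b : ℝ) (hb0 : 0 < b) (hbd : b < dist z w)
    (hmeet : P ⟨b, Set.mem_Icc.mpr ⟨le_of_lt hb0, le_of_lt hbd⟩⟩
      = P' ⟨b, Set.mem_Icc.mpr ⟨le_of_lt hb0, le_of_lt hbd⟩⟩)
    (n : ℕ) (a c : Fin n → ℝ) (hac : ∀ i, a i < c i)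
    (hdisj : ∀ i j, i ≠ j →
      Disjoint (Set.Ioo (a i) (c i)) (Set.Ioo (a j) (c j)))
    (hT : {r : ℝ | ∃ h : r ∈ Set.Icc (0 : ℝ) (dist z w),
        b ≤ r ∧ P ⟨r, h⟩ ≠ P' ⟨r, h⟩} = ⋃ i, Set.Ioo (a i) (c i)) :
    ∃ f : Fin (2 ^ n) →
        {Q : Set.Icc (0 : ℝ)
            (dist (P ⟨b, Set.mem_Icc.mpr ⟨le_of_lt hb0, le_of_lt hbd⟩⟩) w) → X //
          IsGeodesic (P ⟨b, Set.mem_Icc.mpr ⟨le_of_lt hb0, le_of_lt hbd⟩⟩) w Q},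
      Function.Injective f := by
  classical
  obtain ⟨hP0, hPd, hPiso⟩ := hP
  obtain ⟨hP'0, hP'd, hP'iso⟩ := hP'
  have hd0 : (0:ℝ) ≤ dist z w := dist_nonneg
  have hbmem : b ∈ Set.Icc (0:ℝ) (dist z w) := ⟨hb0.le, hbd.le⟩
  set p : X := P ⟨b, Set.mem_Icc.mpr ⟨le_of_lt hb0, le_of_lt hbd⟩⟩ with hpdef
  have hD : dist p w = dist z w - b := by
    have h := hPiso ⟨b, hbmem⟩ ⟨dist z w, Set.right_mem_Icc.mpr dist_nonneg⟩
    rw [hPd] at h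
    calc dist p w = |b - dist z w| := h
      _ = dist z w - b := by rw [abs_sub_comm, abs_of_nonneg (by linarith)]
  -- membership in T
  have hTmem : ∀ (r : ℝ), (∃ i, r ∈ Set.Ioo (a i) (c i)) ↔
      ∃ h : r ∈ Set.Icc (0:ℝ) (dist z w), b ≤ r ∧ P ⟨r, h⟩ ≠ P' ⟨r, h⟩ := by
    intro r
    constructor
    · intro ⟨i, hi⟩
      have hmem : r ∈ ⋃ i, Set.Ioo (a i) (c i) := Set.mem_iUnion.mpr ⟨i, hi⟩
      rw [← hT] at hmem
      exact hmem
    · intro h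
      have hmem : r ∈ {r : ℝ | ∃ h : r ∈ Set.Icc (0:ℝ) (dist z w),
          b ≤ r ∧ P ⟨r, h⟩ ≠ P' ⟨r, h⟩} := h
      rw [hT] at hmem
      exact Set.mem_iUnion.mp hmem
  have hIooP : ∀ i (r : ℝ), r ∈ Set.Ioo (a i) (c i) →
      ∃ h : r ∈ Set.Icc (0:ℝ) (dist z w), b ≤ r ∧ P ⟨r, h⟩ ≠ P' ⟨r, h⟩ :=
    fun i r hr => (hTmem r).1 ⟨i, hr⟩
  have hble : ∀ i, b ≤ a i := by
    intro i
    by_contra h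
    push_neg at h
    have hlt : a i < min b (c i) := lt_min h (hac i)
    have hm1 : min b (c i) ≤ b := min_le_left _ _
    have hm2 : min b (c i) ≤ c i := min_le_right _ _
    obtain ⟨hIcc, hbx, _⟩ := hIooP i ((a i + min b (c i))/2) ⟨by linarith, by linarith⟩
    linarith
  have hcled : ∀ i, c i ≤ dist z w := by
    intro i
    by_contra h
    push_neg at h
    have hm : max (a i) (dist z w) < c i := max_lt (hac i) h
    have hm1 : a i ≤ max (a i) (dist z w) := le_max_left _ _
    have hm2 : dist z w ≤ max (a i) (dist z w) := le_max_right _ _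
    obtain ⟨hIcc, _, _⟩ :=
      hIooP i ((max (a i) (dist z w) + c i)/2) ⟨by linarith, by linarith⟩
    have := hIcc.2
    linarith
  have ha_notin : ∀ i j, a i ∉ Set.Ioo (a j) (c j) := by
    intro i j h
    by_cases hij : i = j
    · subst hij; exact lt_irrefl (a i) h.1
    · have h1 : a i < min (c i) (c j) := lt_min (hac i) h.2
      set y := (a i + min (c i) (c j))/2 with hy
      have hyi : y ∈ Set.Ioo (a i) (c i) :=
        ⟨by rw [hy]; linarith, by
          have : min (c i) (c j) ≤ c i := min_le_left _ _
          rw [hy]; linarith⟩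
      have hyj : y ∈ Set.Ioo (a j) (c j) :=
        ⟨by rw [hy]; have := h.1; linarith, by
          have : min (c i) (c j) ≤ c j := min_le_right _ _
          rw [hy]; linarith⟩
      exact Set.disjoint_left.mp (hdisj i j hij) hyi hyj
  have hc_notin : ∀ i j, c i ∉ Set.Ioo (a j) (c j) := by
    intro i j h
    by_cases hij : i = j
    · subst hij; exact lt_irrefl (c i) h.2
    · have h1 : max (a i) (a j) < c i := max_lt (hac i) h.1
      set y := (max (a i) (a j) + c i)/2 with hy
      have hyi : y ∈ Set.Ioo (a i) (c i) :=
        ⟨by have := le_max_left (a i) (a j); rw [hy]; linarith,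
         by rw [hy]; linarith⟩
      have hyj : y ∈ Set.Ioo (a j) (c j) :=
        ⟨by have := le_max_right (a i) (a j); rw [hy]; linarith,
         by have := h.2; rw [hy]; linarith⟩
      exact Set.disjoint_left.mp (hdisj i j hij) hyi hyj
  have hPP'_eq : ∀ (r : ℝ) (h : r ∈ Set.Icc (0:ℝ) (dist z w)), b ≤ r →
      (∀ j, r ∉ Set.Ioo (a j) (c j)) → P ⟨r, h⟩ = P' ⟨r, h⟩ := by
    intro r h hbr hnot
    by_contra hne
    obtain ⟨j, hj⟩ := (hTmem r).2 ⟨h, hbr, hne⟩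
    exact hnot j hj
  -- the switched paths
  set g : Finset (Fin n) → ℝ → X := fun S r =>
    if hr : r ∈ Set.Icc (0:ℝ) (dist z w) then
      (if ∃ i ∈ S, r ∈ Set.Ioo (a i) (c i) then P' ⟨r, hr⟩ else P ⟨r, hr⟩)
    else z with hg
  have hdistz : ∀ (s : ℝ) (hs : s ∈ Set.Icc (0:ℝ) (dist z w)) (x : X),
      (x = P ⟨s, hs⟩ ∨ x = P' ⟨s, hs⟩) → dist z x = s := by
    intro s hs x hx
    rcases hx with h | h
    · have h2 := hPiso ⟨0, Set.left_mem_Icc.mpr hd0⟩ ⟨s, hs⟩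
      rw [hP0] at h2
      rw [h, h2]
      show |0 - s| = s
      rw [zero_sub, abs_neg, abs_of_nonneg hs.1]
    · have h2 := hP'iso ⟨0, Set.left_mem_Icc.mpr hd0⟩ ⟨s, hs⟩
      rw [hP'0] at h2
      rw [h, h2]
      show |0 - s| = s
      rw [zero_sub, abs_neg, abs_of_nonneg hs.1]
  have hlow : ∀ (r r' : ℝ) (hr : r ∈ Set.Icc (0:ℝ) (dist z w))
      (hr' : r' ∈ Set.Icc (0:ℝ) (dist z w))
      (x1 x2 : X), (x1 = P ⟨r, hr⟩ ∨ x1 = P' ⟨r, hr⟩) →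
      (x2 = P ⟨r', hr'⟩ ∨ x2 = P' ⟨r', hr'⟩) → r' - r ≤ dist x1 x2 := by
    intro r r' hr hr' x1 x2 hx1 hx2
    have h1 := hdistz r hr x1 hx1
    have h2 := hdistz r' hr' x2 hx2
    have h3 := dist_triangle z x1 x2
    linarith
  have hgdist : ∀ (S : Finset (Fin n)) (r r' : ℝ)
      (hr : r ∈ Set.Icc (0:ℝ) (dist z w)) (hr' : r' ∈ Set.Icc (0:ℝ) (dist z w)),
      b ≤ r → b ≤ r' → r ≤ r' → dist (g S r) (g S r') = r' - r := by
    intro S r r' hr hr' hbr hbr' hle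
    rw [hg]
    simp only [dif_pos hr, dif_pos hr']
    by_cases h1 : ∃ i ∈ S, r ∈ Set.Ioo (a i) (c i) <;>
      by_cases h2 : ∃ i ∈ S, r' ∈ Set.Ioo (a i) (c i)
    · rw [if_pos h1, if_pos h2, hP'iso]
      show |r - r'| = r' - r
      rw [abs_sub_comm, abs_of_nonneg (by linarith)]
    · rw [if_pos h1, if_neg h2]
      obtain ⟨i, hiS, hri⟩ := h1
      have hci : c i ≤ r' := by
        by_contra hcon
        push_neg at hcon
        exact h2 ⟨i, hiS, ⟨lt_of_lt_of_le hri.1 hle, hcon⟩⟩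
      have hmIcc : c i ∈ Set.Icc (0:ℝ) (dist z w) :=
        ⟨by have := hble i; have := hac i; linarith, hcled i⟩
      have hmeq : P ⟨c i, hmIcc⟩ = P' ⟨c i, hmIcc⟩ :=
        hPP'_eq _ _ (by have := hble i; have := hac i; linarith) (fun j => hc_notin i j)
      apply le_antisymm
      · have tri := dist_triangle (P' ⟨r, hr⟩) (P' ⟨c i, hmIcc⟩) (P ⟨r', hr'⟩)
        rw [hP'iso] at tri
        have h3 : dist (P' ⟨c i, hmIcc⟩) (P ⟨r', hr'⟩) = |c i - r'| := by
          rw [← hmeq, hPiso]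
        rw [h3] at tri
        have e1 : |r - c i| = c i - r := by
          rw [abs_sub_comm]; exact abs_of_nonneg (by linarith [hri.2])
        have e2 : |c i - r'| = r' - c i := by
          rw [abs_sub_comm]; exact abs_of_nonneg (by linarith)
        have : (↑(⟨r, hr⟩ : Set.Icc (0:ℝ) (dist z w)) : ℝ) = r := rfl
        simp only [this] at tri
        rw [e1, e2] at tri
        linarith
      · exact hlow r r' hr hr' _ _ (Or.inr rfl) (Or.inl rfl)
    · rw [if_neg h1, if_pos h2]
      obtain ⟨j, hjS, hrj⟩ := h2
      have haj : r ≤ a j := by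
        by_contra hcon
        push_neg at hcon
        exact h1 ⟨j, hjS, ⟨hcon, lt_of_le_of_lt hle hrj.2⟩⟩
      have hmIcc : a j ∈ Set.Icc (0:ℝ) (dist z w) :=
        ⟨by have := hble j; linarith, by have := hac j; have := hcled j; linarith⟩
      have hmeq : P ⟨a j, hmIcc⟩ = P' ⟨a j, hmIcc⟩ :=
        hPP'_eq _ _ (hble j) (fun k => ha_notin j k)
      apply le_antisymm
      · have tri := dist_triangle (P ⟨r, hr⟩) (P ⟨a j, hmIcc⟩) (P' ⟨r', hr'⟩)
        rw [hPiso] at tri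
        have h3 : dist (P ⟨a j, hmIcc⟩) (P' ⟨r', hr'⟩) = |a j - r'| := by
          rw [hmeq, hP'iso]
        rw [h3] at tri
        have e1 : |r - a j| = a j - r := by
          rw [abs_sub_comm]; exact abs_of_nonneg (by linarith)
        have e2 : |a j - r'| = r' - a j := by
          rw [abs_sub_comm]; exact abs_of_nonneg (by linarith [hrj.1])
        have : (↑(⟨r, hr⟩ : Set.Icc (0:ℝ) (dist z w)) : ℝ) = r := rfl
        simp only [this] at tri
        rw [e1, e2] at tri
        linarith
      · exact hlow r r' hr hr' _ _ (Or.inl rfl) (Or.inr rfl)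
    · rw [if_neg h1, if_neg h2, hPiso]
      show |r - r'| = r' - r
      rw [abs_sub_comm, abs_of_nonneg (by linarith)]
  -- assemble the geodesics
  set Q : Finset (Fin n) → (Set.Icc (0:ℝ) (dist p w) → X) :=
    fun S t => g S (b + t.1) with hQ
  have hdom : ∀ t : Set.Icc (0:ℝ) (dist p w),
      (b + t.1) ∈ Set.Icc (0:ℝ) (dist z w) ∧ b ≤ b + t.1 := by
    intro t
    have h1 := t.2.1
    have h2 : (t.1 : ℝ) ≤ dist z w - b := le_of_le_of_eq t.2.2 hD
    exact ⟨⟨by linarith, by linarith⟩, by linarith⟩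
  have hQgeo : ∀ S, IsGeodesic p w (Q S) := by
    intro S
    refine ⟨?_, ?_, ?_⟩
    · show g S (b + 0) = p
      rw [add_zero, hg]
      simp only [dif_pos hbmem]
      split_ifs with h
      · obtain ⟨i, hiS, hbi⟩ := h
        exact absurd (hble i) (not_le.mpr hbi.1)
      · rfl
    · show g S (b + dist p w) = w
      rw [hD, show b + (dist z w - b) = dist z w by ring, hg]
      have hdmem : dist z w ∈ Set.Icc (0:ℝ) (dist z w) := Set.right_mem_Icc.mpr hd0
      simp only [dif_pos hdmem]
      split_ifs with h
      · exact hP'd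
      · exact hPd
    · intro s t
      have hs := hdom s
      have ht := hdom t
      show dist (g S (b + s.1)) (g S (b + t.1)) = |s.1 - t.1|
      rcases le_total s.1 t.1 with h | h
      · rw [hgdist S (b + s.1) (b + t.1) hs.1 ht.1 hs.2 ht.2 (by linarith),
          abs_of_nonpos (by linarith)]
        ring
      · rw [dist_comm,
          hgdist S (b + t.1) (b + s.1) ht.1 hs.1 ht.2 hs.2 (by linarith),
          abs_of_nonneg (by linarith)]
        ring
  have hQne : ∀ S S', S ≠ S' → Q S ≠ Q S' := by
    intro S S' hne hQeq
    obtain ⟨i, hi⟩ : ∃ i, ¬((i ∈ S) ↔ (i ∈ S')) := by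
      by_contra h
      push_neg at h
      exact hne (Finset.ext h)
    set r := (a i + c i)/2 with hr
    have hri : r ∈ Set.Ioo (a i) (c i) :=
      ⟨by rw [hr]; linarith [hac i], by rw [hr]; linarith [hac i]⟩
    have hbr : b ≤ r := by have := hble i; have := hri.1; linarith
    have hrIcc : r ∈ Set.Icc (0:ℝ) (dist z w) :=
      ⟨by linarith, by have := hri.2; have := hcled i; linarith⟩
    have ht : r - b ∈ Set.Icc (0:ℝ) (dist p w) := by
      refine ⟨by linarith, ?_⟩
      rw [hD]
      have := hri.2; have := hcled i
      linarith
    have heq := congrFun hQeq ⟨r - b, ht⟩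
    rw [hQ] at heq
    simp only [show b + (r - b) = r by ring] at heq
    have huniq : ∀ j, r ∈ Set.Ioo (a j) (c j) → j = i := by
      intro j hj
      by_contra hji
      exact Set.disjoint_left.mp (hdisj j i hji) hj hri
    have hcond : ∀ T : Finset (Fin n),
        (∃ k ∈ T, r ∈ Set.Ioo (a k) (c k)) ↔ i ∈ T := by
      intro T
      constructor
      · rintro ⟨k, hk, hrk⟩
        exact (huniq k hrk) ▸ hk
      · intro h
        exact ⟨i, h, hri⟩
    obtain ⟨_, _, hrT⟩ := (hTmem r).1 ⟨i, hri⟩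
    rw [hg] at heq
    simp only [dif_pos hrIcc] at heq
    by_cases hiS : i ∈ S <;> by_cases hiS' : i ∈ S'
    · exact hi ⟨fun _ => hiS', fun _ => hiS⟩
    · rw [if_pos ((hcond S).mpr hiS), if_neg (fun hx => hiS' ((hcond S').mp hx))] at heq
      exact hrT heq.symm
    · rw [if_neg (fun hx => hiS ((hcond S).mp hx)), if_pos ((hcond S').mpr hiS')] at heq
      exact hrT heq
    · exact hi ⟨fun h => absurd h hiS, fun h => absurd h hiS'⟩
  have e : Fin (2 ^ n) ≃ Finset (Fin n) :=
    (Fintype.equivFinOfCardEq (by simp)).symm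
  refine ⟨fun k => ⟨Q (e k), hQgeo _⟩, ?_⟩
  intro k k' h
  have h2 : Q (e k) = Q (e k') := congrArg Subtype.val h
  by_contra hkk
  exact hQne (e k) (e k') (fun hS => hkk (e.injective hS)) h2
end

section
/- Let (X, d) be a metric space in which any two points are joined by at most 3 distinct geodesics and such that whenever two geodesics from a common starting point z meet again at a point u ≠ z strictly before both end, the geodesic restrictions give two distinct geodesics from z to u. Then for any z, w ∈ X and any two geodesics P, P' from z to w, the set {t ∈ [0, d(z,w)] : P(t) ≠ P'(t)} has at most two connected components. -/
namespace AtMostTwoAux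

open Set

variable {X : Type*} [MetricSpace X] {z w : X}

/-- Extension of a geodesic to all of `ℝ` by clamping. -/
noncomputable def ext (z w : X) (P : Set.Icc (0 : ℝ) (dist z w) → X) : ℝ → X :=
  fun r => P (Set.projIcc 0 (dist z w) dist_nonneg r)

variable {P P' : Set.Icc (0 : ℝ) (dist z w) → X}

lemma ext_of_mem {r : ℝ} (h : r ∈ Set.Icc (0 : ℝ) (dist z w)) :
    ext z w P r = P ⟨r, h⟩ := by
  unfold ext
  rw [Set.projIcc_of_mem dist_nonneg h]

lemma ext_dist (hP : IsGeodesic z w P) {s t : ℝ}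
    (hs : s ∈ Set.Icc (0 : ℝ) (dist z w)) (ht : t ∈ Set.Icc (0 : ℝ) (dist z w)) :
    dist (ext z w P s) (ext z w P t) = |s - t| := by
  rw [ext_of_mem hs, ext_of_mem ht, hP.2.2]

lemma ext_zero (hP : IsGeodesic z w P) : ext z w P 0 = z := by
  rw [ext_of_mem (Set.left_mem_Icc.mpr dist_nonneg)]; exact hP.1

lemma ext_last (hP : IsGeodesic z w P) : ext z w P (dist z w) = w := by
  rw [ext_of_mem (Set.right_mem_Icc.mpr dist_nonneg)]; exact hP.2.1

lemma ext_dist_z (hP : IsGeodesic z w P) {r : ℝ}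
    (hr : r ∈ Set.Icc (0 : ℝ) (dist z w)) : dist z (ext z w P r) = r := by
  have h0 := ext_dist hP (Set.left_mem_Icc.mpr dist_nonneg) hr
  rw [ext_zero hP] at h0
  rw [h0, zero_sub, abs_neg, abs_of_nonneg hr.1]

lemma ext_continuous (hP : IsGeodesic z w P) : Continuous (ext z w P) := by
  have hiso : Isometry P := Isometry.of_dist_eq fun a b => by
    rw [hP.2.2, Subtype.dist_eq, Real.dist_eq]
  exact hiso.continuous.comp continuous_projIcc

/-- The set of times where the two (extended) geodesics differ. -/
def T (z w : X) (P P' : Set.Icc (0 : ℝ) (dist z w) → X) : Set ℝ :=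
  {r | ext z w P r ≠ ext z w P' r}

lemma T_open (hP : IsGeodesic z w P) (hP' : IsGeodesic z w P') :
    IsOpen (T z w P P') :=
  isOpen_ne_fun (ext_continuous hP) (ext_continuous hP')

lemma T_subset (hP : IsGeodesic z w P) (hP' : IsGeodesic z w P') :
    T z w P P' ⊆ Set.Ioo (0 : ℝ) (dist z w) := by
  intro r hr
  by_contra hmem
  rcases le_or_gt r 0 with h0 | h0
  · apply hr
    show ext z w P r = ext z w P' r
    unfold ext
    rw [Set.projIcc_of_le_left _ h0, hP.1, hP'.1]
  rcases le_or_gt (dist z w) r with h1 | h1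
  · apply hr
    show ext z w P r = ext z w P' r
    unfold ext
    rw [Set.projIcc_of_right_le _ h1, hP.2.1, hP'.2.1]
  exact hmem ⟨h0, h1⟩

lemma T_eq (hP : IsGeodesic z w P) (hP' : IsGeodesic z w P') :
    {r : ℝ | ∃ h : r ∈ Set.Icc (0 : ℝ) (dist z w), P ⟨r, h⟩ ≠ P' ⟨r, h⟩}
      = T z w P P' := by
  ext r
  constructor
  · rintro ⟨h, hne⟩
    show ext z w P r ≠ ext z w P' r
    rw [ext_of_mem h, ext_of_mem h]; exact hne
  · intro hr
    have hIcc : r ∈ Set.Icc (0 : ℝ) (dist z w) :=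
      Set.Ioo_subset_Icc_self (T_subset hP hP' hr)
    refine ⟨hIcc, ?_⟩
    rw [← ext_of_mem (P := P) hIcc, ← ext_of_mem (P := P') hIcc]
    exact hr

/-- boundary points of a component are coincidence points. -/
lemma bd_eq (hP : IsGeodesic z w P) (hP' : IsGeodesic z w P') {t0 : ℝ} (u : ℝ)
    (hucl : u ∈ closure (connectedComponentIn (T z w P P') t0))
    (huI : u ∉ connectedComponentIn (T z w P P') t0) :
    ext z w P u = ext z w P' u := by
  by_contra hne
  have hu : u ∈ T z w P P' := hne
  have hoc : IsOpen (connectedComponentIn (T z w P P') u) :=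
    (T_open hP hP').connectedComponentIn
  obtain ⟨v, hv1, hv2⟩ := _root_.mem_closure_iff.mp hucl _ hoc
    (mem_connectedComponentIn hu)
  have h1 : connectedComponentIn (T z w P P') u
      = connectedComponentIn (T z w P P') v := connectedComponentIn_eq hv1
  have h2 : connectedComponentIn (T z w P P') t0
      = connectedComponentIn (T z w P P') v := connectedComponentIn_eq hv2
  exact huI (h2.trans h1.symm ▸ mem_connectedComponentIn hu)

lemma mixed_dist (hP : IsGeodesic z w P) (hP' : IsGeodesic z w P') {t0 : ℝ}
    {s t : ℝ} (hs : s ∈ connectedComponentIn (T z w P P') t0)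
    (ht : t ∈ Set.Icc (0 : ℝ) (dist z w))
    (htI : t ∉ connectedComponentIn (T z w P P') t0) :
    dist (ext z w P' s) (ext z w P t) = |s - t| := by
  set I := connectedComponentIn (T z w P P') t0 with hIdef
  have hIT : I ⊆ T z w P P' := connectedComponentIn_subset _ _
  have hIoo : I ⊆ Set.Ioo (0 : ℝ) (dist z w) := fun x hx => T_subset hP hP' (hIT hx)
  have hIo : IsOpen I := (T_open hP hP').connectedComponentIn
  have hord : OrdConnected I :=
    (isPreconnected_connectedComponentIn (x := t0)).ordConnected
  have hne : I.Nonempty := ⟨s, hs⟩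
  have hbddA : BddAbove I := ⟨dist z w, fun x hx => (hIoo hx).2.le⟩
  have hbddB : BddBelow I := ⟨0, fun x hx => (hIoo hx).1.le⟩
  have hsIcc : s ∈ Set.Icc (0 : ℝ) (dist z w) := Set.Ioo_subset_Icc_self (hIoo hs)
  rcases lt_trichotomy s t with hst | hst | hst
  · -- s < t : use u = sSup I
    set u := sSup I with hu
    have hsu : s ≤ u := le_csSup hbddA hs
    have hut : u ≤ t := by
      by_contra h
      push_neg at h
      obtain ⟨s', hs', hts'⟩ := exists_lt_of_lt_csSup hne h
      exact htI (hord.out hs hs' ⟨hst.le, hts'.le⟩)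
    have huI : u ∉ I := by
      intro hmem
      obtain ⟨ε, hε, hball⟩ := Metric.isOpen_iff.mp hIo u hmem
      have hmem2 : u + ε / 2 ∈ I := hball (by
        rw [Metric.mem_ball, Real.dist_eq,
          show u + ε / 2 - u = ε / 2 by ring, abs_of_nonneg (by linarith)]
        linarith)
      have := le_csSup hbddA hmem2
      linarith
    have hueq : ext z w P u = ext z w P' u :=
      bd_eq hP hP' u (csSup_mem_closure hne hbddA) huI
    have huIcc : u ∈ Set.Icc (0 : ℝ) (dist z w) :=
      ⟨le_trans hsIcc.1 hsu, le_trans hut ht.2⟩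
    have hup : dist (ext z w P' s) (ext z w P t) ≤ t - s := by
      have h1 := dist_triangle (ext z w P' s) (ext z w P' u) (ext z w P t)
      rw [ext_dist hP' hsIcc huIcc] at h1
      rw [show ext z w P' u = ext z w P u from hueq.symm] at h1
      rw [ext_dist hP huIcc ht] at h1
      rw [abs_of_nonpos (by linarith), abs_of_nonpos (by linarith)] at h1
      linarith
    have hlo : t - s ≤ dist (ext z w P' s) (ext z w P t) := by
      have h1 := dist_triangle z (ext z w P' s) (ext z w P t)
      rw [ext_dist_z hP ht, ext_dist_z hP' hsIcc] at h1
      linarith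
    rw [abs_of_nonpos (by linarith)]
    linarith
  · exact absurd (hst ▸ hs) htI
  · -- t < s : use u = sInf I
    set u := sInf I with hu
    have hus : u ≤ s := csInf_le hbddB hs
    have htu : t ≤ u := by
      by_contra h
      push_neg at h
      obtain ⟨s', hs', hs't⟩ := exists_lt_of_csInf_lt hne h
      exact htI (hord.out hs' hs ⟨hs't.le, hst.le⟩)
    have huI : u ∉ I := by
      intro hmem
      obtain ⟨ε, hε, hball⟩ := Metric.isOpen_iff.mp hIo u hmem
      have hmem2 : u - ε / 2 ∈ I := hball (by
        rw [Metric.mem_ball, Real.dist_eq,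
          show u - ε / 2 - u = -(ε / 2) by ring, abs_neg,
          abs_of_nonneg (by linarith)]
        linarith)
      have := csInf_le hbddB hmem2
      linarith
    have hueq : ext z w P u = ext z w P' u :=
      bd_eq hP hP' u (csInf_mem_closure hne hbddB) huI
    have huIcc : u ∈ Set.Icc (0 : ℝ) (dist z w) :=
      ⟨le_trans ht.1 htu, le_trans hus hsIcc.2⟩
    have hup : dist (ext z w P' s) (ext z w P t) ≤ s - t := by
      have h1 := dist_triangle (ext z w P' s) (ext z w P' u) (ext z w P t)
      rw [ext_dist hP' hsIcc huIcc] at h1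
      rw [show ext z w P' u = ext z w P u from hueq.symm] at h1
      rw [ext_dist hP huIcc ht] at h1
      rw [abs_of_nonneg (by linarith), abs_of_nonneg (by linarith)] at h1
      linarith
    have hlo : s - t ≤ dist (ext z w P' s) (ext z w P t) := by
      have h1 := dist_triangle z (ext z w P t) (ext z w P' s)
      rw [ext_dist_z hP ht, ext_dist_z hP' hsIcc, dist_comm (ext z w P t)] at h1
      linarith
    rw [abs_of_nonneg (by linarith)]
    linarith

/-- The glued path: follow `P'` on the component of `t0`, `P` elsewhere. -/
noncomputable def glue (z w : X) (P P' : Set.Icc (0 : ℝ) (dist z w) → X)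
    (t0 : ℝ) : Set.Icc (0 : ℝ) (dist z w) → X :=
  fun r => @ite _ (r.1 ∈ connectedComponentIn (T z w P P') t0)
    (Classical.propDecidable _) (ext z w P' r.1) (ext z w P r.1)

lemma glue_pos {t0 : ℝ} {r : Set.Icc (0 : ℝ) (dist z w)}
    (h : r.1 ∈ connectedComponentIn (T z w P P') t0) :
    glue z w P P' t0 r = ext z w P' r.1 := by
  simp only [glue, if_pos h]

lemma glue_neg {t0 : ℝ} {r : Set.Icc (0 : ℝ) (dist z w)}
    (h : r.1 ∉ connectedComponentIn (T z w P P') t0) :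
    glue z w P P' t0 r = ext z w P r.1 := by
  simp only [glue, if_neg h]

lemma glue_isGeodesic (hP : IsGeodesic z w P) (hP' : IsGeodesic z w P')
    {t0 : ℝ} : IsGeodesic z w (glue z w P P' t0) := by
  have hIoo : connectedComponentIn (T z w P P') t0 ⊆ Set.Ioo (0 : ℝ) (dist z w) :=
    fun x hx => T_subset hP hP' (connectedComponentIn_subset _ _ hx)
  have h0I : (0 : ℝ) ∉ connectedComponentIn (T z w P P') t0 := fun h =>
    absurd (hIoo h).1 (lt_irrefl 0)
  have hDI : dist z w ∉ connectedComponentIn (T z w P P') t0 := fun h =>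
    absurd (hIoo h).2 (lt_irrefl _)
  refine ⟨?_, ?_, ?_⟩
  · rw [glue_neg h0I]; exact ext_zero hP
  · rw [glue_neg hDI]; exact ext_last hP
  · intro s t
    by_cases hs : s.1 ∈ connectedComponentIn (T z w P P') t0 <;>
      by_cases ht : t.1 ∈ connectedComponentIn (T z w P P') t0
    · rw [glue_pos hs, glue_pos ht]; exact ext_dist hP' s.2 t.2
    · rw [glue_pos hs, glue_neg ht]; exact mixed_dist hP hP' hs t.2 ht
    · rw [glue_neg hs, glue_pos ht, dist_comm,
        mixed_dist hP hP' ht s.2 hs, abs_sub_comm]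
    · rw [glue_neg hs, glue_neg ht]; exact ext_dist hP s.2 t.2

end AtMostTwoAux

open AtMostTwoAux in
/-- In a metric space in which any two points are joined by at most 3 distinct
geodesics, and in which two geodesics from a common point `z` which separate and
meet again at a point `u ≠ z` strictly before both end give rise to two distinct
geodesics from `z` to `u`, the set of times at which two geodesics `P, P'` from
`z` to `w` differ has at most two connected components. -/
theorem at_most_two_excursions {X : Type*} [MetricSpace X]
    (hatmost3 : ∀ (x y : X)
      (f : Fin 4 → {Q : Set.Icc (0 : ℝ) (dist x y) → X // IsGeodesic x y Q}),
      ¬ Function.Injective f)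
    (hrecoalesce : ∀ (z w w' : X) (P : Set.Icc (0 : ℝ) (dist z w) → X)
      (P' : Set.Icc (0 : ℝ) (dist z w') → X), IsGeodesic z w P →
      IsGeodesic z w' P' →
      ∀ (u : ℝ) (hu : u ∈ Set.Icc (0 : ℝ) (dist z w))
        (hu' : u ∈ Set.Icc (0 : ℝ) (dist z w')),
        0 < u → u < dist z w → u < dist z w' →
        P ⟨u, hu⟩ = P' ⟨u, hu'⟩ →
        (∃ (r : ℝ) (hr : r ∈ Set.Icc (0 : ℝ) (dist z w))
          (hr' : r ∈ Set.Icc (0 : ℝ) (dist z w')),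
          r < u ∧ P ⟨r, hr⟩ ≠ P' ⟨r, hr'⟩) →
        ∃ Q₁ Q₂ : Set.Icc (0 : ℝ) (dist z (P ⟨u, hu⟩)) → X,
          IsGeodesic z (P ⟨u, hu⟩) Q₁ ∧ IsGeodesic z (P ⟨u, hu⟩) Q₂ ∧ Q₁ ≠ Q₂)
    (z w : X) (P P' : Set.Icc (0 : ℝ) (dist z w) → X)
    (hP : IsGeodesic z w P) (hP' : IsGeodesic z w P') :
    ∃ C₁ C₂ : Set ℝ,
      ∀ t ∈ {r : ℝ | ∃ h : r ∈ Set.Icc (0 : ℝ) (dist z w), P ⟨r, h⟩ ≠ P' ⟨r, h⟩},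
        connectedComponentIn
            {r : ℝ | ∃ h : r ∈ Set.Icc (0 : ℝ) (dist z w), P ⟨r, h⟩ ≠ P' ⟨r, h⟩}
            t = C₁ ∨
        connectedComponentIn
            {r : ℝ | ∃ h : r ∈ Set.Icc (0 : ℝ) (dist z w), P ⟨r, h⟩ ≠ P' ⟨r, h⟩}
            t = C₂ := by
  classical
  rw [T_eq hP hP']
  -- key claim: all connected components of `T` coincide
  have key : ∀ t1 t2, t1 ∈ T z w P P' → t2 ∈ T z w P P' → t1 < t2 →
      connectedComponentIn (T z w P P') t1 = connectedComponentIn (T z w P P') t2 := by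
    intro t1 t2 h1 h2 hlt
    by_contra hne
    have ht2I1 : t2 ∉ connectedComponentIn (T z w P P') t1 := fun h =>
      hne (connectedComponentIn_eq h)
    have ht1I2 : t1 ∉ connectedComponentIn (T z w P P') t2 := fun h =>
      hne ((connectedComponentIn_eq h).symm)
    have h1Icc : t1 ∈ Set.Icc (0 : ℝ) (dist z w) :=
      Set.Ioo_subset_Icc_self (T_subset hP hP' h1)
    have h2Icc : t2 ∈ Set.Icc (0 : ℝ) (dist z w) :=
      Set.Ioo_subset_Icc_self (T_subset hP hP' h2)
    have hQ1 : IsGeodesic z w (glue z w P P' t1) := glue_isGeodesic hP hP'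
    have hQ2 : IsGeodesic z w (glue z w P P' t2) := glue_isGeodesic hP hP'
    have d1 : P ⟨t1, h1Icc⟩ ≠ P' ⟨t1, h1Icc⟩ := by
      have h1' : ext z w P t1 ≠ ext z w P' t1 := h1
      rwa [ext_of_mem (P := P) h1Icc, ext_of_mem (P := P') h1Icc] at h1'
    have d2 : P ⟨t2, h2Icc⟩ ≠ P' ⟨t2, h2Icc⟩ := by
      have h2' : ext z w P t2 ≠ ext z w P' t2 := h2
      rwa [ext_of_mem (P := P) h2Icc, ext_of_mem (P := P') h2Icc] at h2'
    have e1 : glue z w P P' t1 ⟨t1, h1Icc⟩ = P' ⟨t1, h1Icc⟩ :=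
      (glue_pos (r := ⟨t1, h1Icc⟩) (mem_connectedComponentIn h1)).trans
        (ext_of_mem h1Icc)
    have e2 : glue z w P P' t1 ⟨t2, h2Icc⟩ = P ⟨t2, h2Icc⟩ :=
      (glue_neg (r := ⟨t2, h2Icc⟩) ht2I1).trans (ext_of_mem h2Icc)
    have e3 : glue z w P P' t2 ⟨t2, h2Icc⟩ = P' ⟨t2, h2Icc⟩ :=
      (glue_pos (r := ⟨t2, h2Icc⟩) (mem_connectedComponentIn h2)).trans
        (ext_of_mem h2Icc)
    have e4 : glue z w P P' t2 ⟨t1, h1Icc⟩ = P ⟨t1, h1Icc⟩ :=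
      (glue_neg (r := ⟨t1, h1Icc⟩) ht1I2).trans (ext_of_mem h1Icc)
    -- pairwise distinctness
    have n01 : P ≠ P' := fun h => d1 (by rw [h])
    have n02 : P ≠ glue z w P P' t1 := fun h => d1 (by rw [h, e1])
    have n03 : P ≠ glue z w P P' t2 := fun h => d2 (by rw [h, e3])
    have n12 : P' ≠ glue z w P P' t1 := fun h => d2 (by rw [← e2, ← h])
    have n13 : P' ≠ glue z w P P' t2 := fun h => d1 (by rw [← e4, ← h])
    have n23 : glue z w P P' t1 ≠ glue z w P P' t2 := fun h =>
      d1 (by rw [← e1, h, e4])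
    refine hatmost3 z w
      (fun i => match i with
        | 0 => ⟨P, hP⟩
        | 1 => ⟨P', hP'⟩
        | 2 => ⟨glue z w P P' t1, hQ1⟩
        | 3 => ⟨glue z w P P' t2, hQ2⟩) ?_
    intro i j hij
    have hij' := congrArg Subtype.val hij
    fin_cases i <;> fin_cases j <;>
      first
        | rfl
        | exact absurd hij'
            (by first
              | exact n01 | exact n02 | exact n03
              | exact n12 | exact n13 | exact n23
              | exact n01.symm | exact n02.symm | exact n03.symm
              | exact n12.symm | exact n13.symm | exact n23.symm)
  by_cases hSne : (T z w P P').Nonempty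
  · obtain ⟨t0, ht0⟩ := hSne
    refine ⟨connectedComponentIn (T z w P P') t0,
      connectedComponentIn (T z w P P') t0, fun t ht => Or.inl ?_⟩
    rcases lt_trichotomy t t0 with h | h | h
    · exact key t t0 ht ht0 h
    · rw [h]
    · exact (key t0 t ht0 ht h).symm
  · exact ⟨∅, ∅, fun t ht => absurd ⟨t, ht⟩ hSne⟩
end
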